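/- Let A and B be finite abelian groups, μ a linking form on A and ν a linking form on B. Suppose A = A₀ ⊕ A₁ is an internal direct sum of subgroups (A₀ ∩ A₁ = {0} and A₀ + A₁ = A) with μ(x,y) = 0 for all x,y ∈ A₀, and let L be a subgroup of A × B on which μ ⊕ ν vanishes (i.e. (μ ⊕ ν)(u,v) = 0 for all u,v ∈ L). Let π₁ : A → A₁ denote the projection along A₀, and set L_{A₁} = {π₁(a) : a ∈ A and (a,b) ∈ L for some b ∈ B}. Then |{u ∈ A₀ : (u, 0) ∈ L}| · |A₀| · |L_{A₁}| ≤ |A|. -/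

import Mathlib

/-- A linking form on a (finite) abelian group `G`: a `ℚ/ℤ`-valued pairing that is
additive in each variable, symmetric, and nondegenerate. -/
def IsLinkingForm {G : Type*} [AddCommGroup G] (l : G → G → AddCircle (1 : ℚ)) : Prop :=
  (∀ x y z : G, l (x + y) z = l x z + l y z) ∧
  (∀ x y z : G, l x (y + z) = l x y + l x z) ∧
  (∀ x y : G, l x y = l y x) ∧
  (∀ x : G, x ≠ 0 → ∃ y : G, l x y ≠ 0)


lemma units_eq (x y : ℂˣ) (h : (x : ℂ) = y) : Additive.ofMul x = Additive.ofMul y :=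
  congrArg Additive.ofMul (Units.ext h)

noncomputable def ratChar : ℚ →+ Additive ℂˣ where
  toFun q := Additive.ofMul (Units.mk0 (Complex.exp (2 * Real.pi * Complex.I * q))
    (Complex.exp_ne_zero _))
  map_zero' := units_eq _ 1 (by simp)
  map_add' a b := units_eq _ (Units.mk0 _ (Complex.exp_ne_zero _) * Units.mk0 _ (Complex.exp_ne_zero _)) (by
    simp only [Units.val_mul, Units.val_mk0, ← Complex.exp_add]
    push_cast
    ring_nf)

lemma ratChar_injective_aux {q : ℚ} (h : ratChar q = 0) : q ∈ AddSubgroup.zmultiples (1 : ℚ) := by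
  have h1 : Complex.exp (2 * Real.pi * Complex.I * q) = 1 := by
    have := congrArg (fun x : Additive ℂˣ => ((x.toMul : ℂˣ) : ℂ)) h
    simpa [ratChar] using this
  obtain ⟨n, hn⟩ := Complex.exp_eq_one_iff.mp h1
  have h2 : (q : ℂ) = n := by
    have hne : (2 * Real.pi * Complex.I : ℂ) ≠ 0 := by
      simpa [mul_comm] using Complex.two_pi_I_ne_zero
    have : (2 * Real.pi * Complex.I) * q = (2 * Real.pi * Complex.I) * n := by
      rw [hn]; ring
    exact mul_left_cancel₀ hne this
  have h3 : q = (n : ℚ) := by exact_mod_cast h2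
  exact ⟨n, by simp [h3]⟩

noncomputable def circleChar : AddCircle (1 : ℚ) →+ Additive ℂˣ :=
  QuotientAddGroup.lift (AddSubgroup.zmultiples (1 : ℚ)) ratChar (by
    intro x hx
    obtain ⟨n, hn⟩ := hx
    simp only [zsmul_eq_mul, mul_one] at hn
    subst hn
    refine units_eq _ 1 ?_
    show Complex.exp (2 * Real.pi * Complex.I * ((n : ℚ) : ℂ)) = 1
    push_cast
    rw [show 2 * (Real.pi : ℂ) * Complex.I * n = n * (2 * Real.pi * Complex.I) by ring]
    exact Complex.exp_int_mul_two_pi_mul_I n)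

lemma circleChar_injective : Function.Injective circleChar := by
  rw [injective_iff_map_eq_zero]
  intro x
  induction x using QuotientAddGroup.induction_on with
  | H q =>
    intro h
    have : ratChar q = 0 := h
    exact (QuotientAddGroup.eq_zero_iff q).mpr (ratChar_injective_aux this)



section Dual
variable (G : Type*) [AddCommGroup G] [Finite G]

noncomputable def dualEmb : (G →+ AddCircle (1 : ℚ)) → (Multiplicative G →* ℂˣ) :=
  fun φ => AddMonoidHom.toMultiplicativeLeft (circleChar.comp φ)

lemma dualEmb_injective : Function.Injective (dualEmb G) := by
  intro φ ψ h
  have := AddMonoidHom.toMultiplicativeLeft.injective h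
  ext g
  exact circleChar_injective (congrArg (fun f : G →+ Additive ℂˣ => f g) this)

lemma finite_mulDual : Finite (Multiplicative G →* ℂˣ) := by
  haveI : NeZero (Monoid.exponent (Multiplicative G)) :=
    ⟨Monoid.exponent_ne_zero_of_finite⟩
  obtain ⟨e⟩ := CommGroup.monoidHom_mulEquiv_of_hasEnoughRootsOfUnity (Multiplicative G) ℂ
  exact Finite.of_equiv _ e.toEquiv.symm

lemma card_mulDual : Nat.card (Multiplicative G →* ℂˣ) = Nat.card G := by
  haveI : NeZero (Monoid.exponent (Multiplicative G)) :=
    ⟨Monoid.exponent_ne_zero_of_finite⟩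
  obtain ⟨e⟩ := CommGroup.monoidHom_mulEquiv_of_hasEnoughRootsOfUnity (Multiplicative G) ℂ
  exact Nat.card_congr e.toEquiv

lemma finite_dual : Finite (G →+ AddCircle (1 : ℚ)) := by
  haveI := finite_mulDual G
  exact Finite.of_injective _ (dualEmb_injective G)

lemma card_dual_le : Nat.card (G →+ AddCircle (1 : ℚ)) ≤ Nat.card G := by
  haveI := finite_mulDual G
  calc Nat.card (G →+ AddCircle (1 : ℚ)) ≤ Nat.card (Multiplicative G →* ℂˣ) :=
        Nat.card_le_card_of_injective _ (dualEmb_injective G)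
    _ = Nat.card G := card_mulDual G

lemma card_le_card_dual : Nat.card G ≤ Nat.card (G →+ AddCircle (1 : ℚ)) := by
  haveI := finite_dual G
  -- evaluation map into double dual is injective
  set D := G →+ AddCircle (1 : ℚ)
  haveI : Finite (D →+ AddCircle (1 : ℚ)) := finite_dual D
  have hinj : Function.Injective (fun g : G => (AddMonoidHom.eval g : D →+ AddCircle (1 : ℚ))) := by
    intro g g' h
    by_contra hne
    have : g - g' ≠ 0 := sub_ne_zero.mpr hne
    obtain ⟨c, hc⟩ := CharacterModule.exists_character_apply_ne_zero_of_ne_zero this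
    apply hc
    have : (c : G →+ AddCircle (1:ℚ)) g = c g' := congrArg (fun f : D →+ AddCircle (1:ℚ) => f c) h
    simp [map_sub, this]
  calc Nat.card G ≤ Nat.card (D →+ AddCircle (1 : ℚ)) := Nat.card_le_card_of_injective _ hinj
    _ ≤ Nat.card D := card_dual_le D

lemma card_dual (G : Type*) [AddCommGroup G] [Finite G] :
    Nat.card (G →+ AddCircle (1 : ℚ)) = Nat.card G :=
  le_antisymm (card_dual_le G) (card_le_card_dual G)

end Dual

/-- With `A = A₀ ⊕ A₁`, `μ` vanishing on `A₀`, and `L ≤ A × B` isotropic for `μ ⊕ ν`: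
`|L ∩ (A₀ ⊕ 0)| ⬝ |A₀| ⬝ |L_{A₁}| ≤ |A|`.  Here `L_{A₁}` is the set of projections
`π₁(a)` (projection onto `A₁` along `A₀`) over all `a` appearing as the first
coordinate of an element of `L`; equivalently `L_{A₁}` consists of the `w ∈ A₁` with
`(a₀' + w, b) ∈ L` for some `a₀' ∈ A₀` and some `b ∈ B`. -/
theorem stmt5 {A B : Type*} [AddCommGroup A] [Finite A] [AddCommGroup B] [Finite B]
    (μ : A → A → AddCircle (1 : ℚ)) (ν : B → B → AddCircle (1 : ℚ))
    (hμ : IsLinkingForm μ) (hν : IsLinkingForm ν)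
    (A₀ A₁ : AddSubgroup A)
    (hinf : A₀ ⊓ A₁ = ⊥) (hsup : A₀ ⊔ A₁ = ⊤)
    (hA₀μ : ∀ x ∈ A₀, ∀ y ∈ A₀, μ x y = 0)
    (L : AddSubgroup (A × B))
    (hLform : ∀ u ∈ L, ∀ v ∈ L, μ u.1 v.1 + ν u.2 v.2 = 0) :
    Nat.card {u : A | u ∈ A₀ ∧ ((u, (0 : B)) : A × B) ∈ L} * Nat.card A₀ *
        Nat.card {w : A | w ∈ A₁ ∧ ∃ a₀' ∈ A₀, ∃ b : B, ((a₀' + w, b) : A × B) ∈ L} ≤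
      Nat.card A := by
  obtain ⟨hμl, hμr, hμsym, hμnd⟩ := hμ
  obtain ⟨hνl, hνr, hνsym, hνnd⟩ := hν
  -- basic consequences
  have hμr0 : ∀ x : A, μ x 0 = 0 := fun x => by
    have h := hμr x 0 0; rw [add_zero] at h; exact (left_eq_add.mp h)
  have hμl0 : ∀ x : A, μ 0 x = 0 := fun x => by
    have h := hμl 0 0 x; rw [add_zero] at h; exact (left_eq_add.mp h)
  have hνl0 : ∀ x : B, ν 0 x = 0 := fun x => by
    have h := hνl 0 0 x; rw [add_zero] at h; exact (left_eq_add.mp h)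
  have hμlneg : ∀ x y : A, μ (-x) y = - μ x y := fun x y => by
    have h := hμl x (-x) y; rw [add_neg_cancel, hμl0] at h
    exact (eq_neg_of_add_eq_zero_right h.symm)
  -- the subgroup S
  set S : AddSubgroup A :=
    { carrier := {u : A | u ∈ A₀ ∧ ((u, (0 : B)) : A × B) ∈ L}
      zero_mem' := ⟨A₀.zero_mem, L.zero_mem⟩
      add_mem' := fun {a b} ha hb => ⟨A₀.add_mem ha.1 hb.1, by
        have := L.add_mem ha.2 hb.2
        simpa using this⟩
      neg_mem' := fun {a} ha => ⟨A₀.neg_mem ha.1, by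
        have := L.neg_mem ha.2
        simpa using this⟩ } with hS
  -- the subgroup W
  set W : AddSubgroup A :=
    { carrier := {w : A | w ∈ A₁ ∧ ∃ a₀' ∈ A₀, ∃ b : B, ((a₀' + w, b) : A × B) ∈ L}
      zero_mem' := ⟨A₁.zero_mem, 0, A₀.zero_mem, 0, by rw [add_zero]; exact L.zero_mem⟩
      add_mem' := fun {a b} ha hb => by
        obtain ⟨ha1, x, hx, c, hxc⟩ := ha
        obtain ⟨hb1, y, hy, d, hyd⟩ := hb
        refine ⟨A₁.add_mem ha1 hb1, x + y, A₀.add_mem hx hy, c + d, ?_⟩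
        have := L.add_mem hxc hyd
        have he : ((x + a, c) : A × B) + (y + b, d) = ((x + y) + (a + b), c + d) := by
          ext <;> simp <;> abel
        rwa [he] at this
      neg_mem' := fun {a} ha => by
        obtain ⟨ha1, x, hx, c, hxc⟩ := ha
        refine ⟨A₁.neg_mem ha1, -x, A₀.neg_mem hx, -c, ?_⟩
        have := L.neg_mem hxc
        have he : (-((x + a, c) : A × B)) = ((-x) + (-a), -c) := by
          ext <;> simp <;> abel
        rwa [he] at this } with hW
  -- key orthogonality: μ s w = 0 for s ∈ S, w ∈ W
  have key : ∀ s ∈ S, ∀ w ∈ W, μ s w = 0 := by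
    intro s hs w hw
    obtain ⟨hs0, hsL⟩ := hs
    obtain ⟨hw1, x, hx, c, hxc⟩ := hw
    have h := hLform _ hsL _ hxc
    simp only at h
    rw [hνl0, add_zero, hμr s x w, hA₀μ s hs0 x hx, zero_add] at h
    exact h
  -- nondegeneracy on A₁ side for s ∈ A₀
  have nd : ∀ s : A, s ∈ A₀ → (∀ y ∈ A₁, μ s y = 0) → s = 0 := by
    intro s hs0 hy
    by_contra hne
    obtain ⟨y, hyne⟩ := hμnd s hne
    have : y ∈ A₀ ⊔ A₁ := hsup.symm ▸ AddSubgroup.mem_top y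
    obtain ⟨y₀, hy₀, y₁, hy₁, rfl⟩ := AddSubgroup.mem_sup.mp this
    rw [hμr, hA₀μ s hs0 y₀ hy₀, hy y₁ hy₁, add_zero] at hyne
    exact hyne rfl
  -- the pairing map into the dual of S
  have memS : ∀ s : ↥S, (s : A) ∈ A₀ := fun s => s.2.1
  set g : ↥A₁ →+ (↥S →+ AddCircle (1 : ℚ)) :=
    { toFun := fun x =>
        { toFun := fun s => μ (s : A) (x : A)
          map_zero' := hμl0 _
          map_add' := fun a b => hμl _ _ _ }
      map_zero' := by ext s; exact hμr0 _
      map_add' := fun a b => by ext s; exact hμr _ _ _ } with hg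
  -- surjectivity of the global duality map M
  set M : A →+ (A →+ AddCircle (1 : ℚ)) :=
    { toFun := fun x =>
        { toFun := fun y => μ y x
          map_zero' := hμl0 _
          map_add' := fun a b => hμl _ _ _ }
      map_zero' := by ext y; exact hμr0 _
      map_add' := fun a b => by ext y; exact hμr _ _ _ } with hM
  haveI : Finite (A →+ AddCircle (1 : ℚ)) := finite_dual A
  have Minj : Function.Injective M := by
    intro x y h
    rw [← sub_eq_zero]
    by_contra hne
    obtain ⟨z, hz⟩ := hμnd _ hne
    apply hz
    have hxy : μ z x = μ z y := congrArg (fun f : A →+ AddCircle (1:ℚ) => f z) h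
    rw [hμsym, sub_eq_add_neg, hμr z x (-y), hμsym z (-y), hμlneg, ← hμsym z y, hxy]
    simp
  have Msurj : Function.Surjective M := by
    have hbij := (Nat.bijective_iff_injective_and_card M).mpr ⟨Minj, (card_dual A).symm⟩
    exact hbij.2
  -- surjectivity of g
  haveI : Finite ↥S := Subtype.finite
  haveI : Finite ↥A₁ := Subtype.finite
  have gsurj : Function.Surjective g := by
    intro c
    -- extend c to a character of A
    have hdsurj := CharacterModule.dual_surjective_of_injective
      ((S.subtype).toIntLinearMap) (by exact Subtype.coe_injective)
    obtain ⟨d, hd⟩ := hdsurj c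
    obtain ⟨x, hx⟩ := Msurj d
    have hxmem : x ∈ A₀ ⊔ A₁ := hsup.symm ▸ AddSubgroup.mem_top x
    obtain ⟨x₀, hx₀, x₁, hx₁, hsum⟩ := AddSubgroup.mem_sup.mp hxmem
    refine ⟨⟨x₁, hx₁⟩, ?_⟩
    ext s
    have h1 : μ (s : A) x = d (s : A) := congrArg (fun f : A →+ AddCircle (1:ℚ) => f s) hx
    have h2 : d (s : A) = c s := congrArg (fun f => f s) hd
    show μ (s : A) x₁ = c s
    rw [← h2, ← h1, ← hsum, hμr, hA₀μ s (memS s) x₀ hx₀, zero_add]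
  -- W embeds into ker g
  haveI : Finite ↥W := Subtype.finite
  haveI : Finite ↥(g.ker) := Subtype.finite
  have hWker : Nat.card ↥W ≤ Nat.card ↥(g.ker) := by
    have : Function.Injective (fun w : ↥W => (⟨⟨(w : A), w.2.1⟩, by
        rw [AddMonoidHom.mem_ker]
        ext s
        exact key _ s.2 _ w.2⟩ : ↥(g.ker))) := by
      intro w w' h
      apply Subtype.ext
      exact congrArg (fun z : ↥(g.ker) => ((z : ↥A₁) : A)) h
    exact Nat.card_le_card_of_injective _ this
  -- count: |A₁| = |S| * |ker g|
  have hcount : Nat.card ↥A₁ = Nat.card ↥S * Nat.card ↥(g.ker) := by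
    have h1 : Nat.card ↥A₁ = Nat.card (↥A₁ ⧸ g.ker) * Nat.card ↥(g.ker) :=
      AddSubgroup.card_eq_card_quotient_mul_card_addSubgroup g.ker
    have h2 : Nat.card (↥A₁ ⧸ g.ker) = Nat.card (↥S →+ AddCircle (1 : ℚ)) :=
      Nat.card_congr (QuotientAddGroup.quotientKerEquivOfSurjective g gsurj).toEquiv
    rw [h1, h2, card_dual ↥S]
  -- |A| = |A₀| * |A₁|
  have hA : Nat.card A = Nat.card ↥A₀ * Nat.card ↥A₁ := by
    have hc : IsCompl (AddSubgroup.toIntSubmodule A₀) (AddSubgroup.toIntSubmodule A₁) := by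
      constructor
      · rw [disjoint_iff, ← map_inf, hinf]; rfl
      · rw [codisjoint_iff, ← map_sup, hsup]; rfl
    have e := Submodule.prodEquivOfIsCompl _ _ hc
    have := Nat.card_congr e.toEquiv
    rw [Nat.card_prod] at this
    exact this.symm
  -- finish
  have hfin : Nat.card ↥S * Nat.card ↥A₀ * Nat.card ↥W ≤ Nat.card A := by
    rw [hA, hcount]
    calc Nat.card ↥S * Nat.card ↥A₀ * Nat.card ↥W
        = Nat.card ↥A₀ * (Nat.card ↥S * Nat.card ↥W) := by ring
      _ ≤ Nat.card ↥A₀ * (Nat.card ↥S * Nat.card ↥(g.ker)) :=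
          Nat.mul_le_mul_left _ (Nat.mul_le_mul_left _ hWker)
  exact hfin
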